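/- For any connected graph G of order n ≥ 2 and any integer n' ≥ 2, the strong resolving graph of G∘K_{n'} is isomorphic to (G_SR ∘ K_{n'}) ∪ (n − |∂(G)|) disjoint copies of K_{n'}, and consequently dim_s(G∘K_{n'}) = n(n'−1) + dim_s(G). -/

import Mathlib

open SimpleGraph

namespace Paper

variable {α β : Type*}

/-- The lexicographic product of two simple graphs. -/
def lexProd (G : SimpleGraph α) (H : SimpleGraph β) : SimpleGraph (α × β) where
  Adj p q := G.Adj p.1 q.1 ∨ (p.1 = q.1 ∧ H.Adj p.2 q.2)
  symm := ⟨by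
    rintro ⟨a, b⟩ ⟨c, d⟩ (h | ⟨h1, h2⟩)
    · exact Or.inl h.symm
    · exact Or.inr ⟨h1.symm, h2.symm⟩⟩
  loopless := ⟨by
    rintro ⟨a, b⟩ (h | ⟨h1, h2⟩)
    · exact G.irrefl h
    · exact H.irrefl h2⟩

/-- `u` is maximally distant from `v`. -/
def MaxDistant (G : SimpleGraph α) (u v : α) : Prop :=
  ∀ w, G.Adj u w → G.edist v w ≤ G.edist u v

/-- `u` and `v` are mutually maximally distant. -/
def MMD (G : SimpleGraph α) (u v : α) : Prop :=
  MaxDistant G u v ∧ MaxDistant G v u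

/-- Two vertices are true twins if they have the same closed neighborhood. -/
def TrueTwins (G : SimpleGraph α) (u v : α) : Prop :=
  ∀ w, (G.Adj u w ∨ u = w) ↔ (G.Adj v w ∨ v = w)

/-- The boundary of a graph: vertices belonging to some mutually maximally distant pair. -/
def boundary (G : SimpleGraph α) : Set α := {u | ∃ v, u ≠ v ∧ MMD G u v}

/-- The strong resolving graph of `G`, with vertex set the boundary of `G`. -/
def srGraph (G : SimpleGraph α) : SimpleGraph (boundary G) where
  Adj u v := u.1 ≠ v.1 ∧ MMD G u.1 v.1
  symm := ⟨fun u v h => ⟨h.1.symm, h.2.2, h.2.1⟩⟩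
  loopless := ⟨fun u h => h.1 rfl⟩

/-- The graph `G*`: same vertices, `u ~ v` iff `d_G(u,v) ≥ 2` or `u,v` are true twins. -/
def gstar (G : SimpleGraph α) : SimpleGraph α where
  Adj u v := u ≠ v ∧ (2 ≤ G.edist u v ∨ TrueTwins G u v)
  symm := ⟨by
    rintro u v ⟨h1, (h2 | h2)⟩
    · exact ⟨h1.symm, Or.inl (by rwa [G.edist_comm] at h2)⟩
    · exact ⟨h1.symm, Or.inr fun w => (h2 w).symm⟩⟩
  loopless := ⟨fun u h => h.1 rfl⟩

/-- `G*` with its isolated vertices removed. -/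
def gstarMinus (G : SimpleGraph α) : SimpleGraph {x | ∃ y, (gstar G).Adj x y} :=
  SimpleGraph.induce _ (gstar G)

/-- Disjoint union of two graphs. -/
def disjUnion (G : SimpleGraph α) (H : SimpleGraph β) : SimpleGraph (α ⊕ β) where
  Adj x y := match x, y with
    | Sum.inl a, Sum.inl b => G.Adj a b
    | Sum.inr a, Sum.inr b => H.Adj a b
    | _, _ => False
  symm := ⟨by
    rintro (a | a) (b | b) h <;> simp_all <;> exact h.symm⟩
  loopless := ⟨by
    rintro (a | a) h <;> simp_all⟩

/-- `k` disjoint copies of a graph. -/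
def copies (k : ℕ) (G : SimpleGraph α) : SimpleGraph (Fin k × α) where
  Adj p q := p.1 = q.1 ∧ G.Adj p.2 q.2
  symm := ⟨fun p q h => ⟨h.1.symm, h.2.symm⟩⟩
  loopless := ⟨fun p h => G.irrefl h.2⟩

/-- The join `K₁ + H` of a single vertex with `H`. -/
def joinK1 (H : SimpleGraph β) : SimpleGraph (Unit ⊕ β) where
  Adj x y := match x, y with
    | Sum.inl _, Sum.inl _ => False
    | Sum.inl _, Sum.inr _ => True
    | Sum.inr _, Sum.inl _ => True
    | Sum.inr a, Sum.inr b => H.Adj a b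
  symm := ⟨by
    rintro (a | a) (b | b) h <;> simp_all <;> exact h.symm⟩
  loopless := ⟨by
    rintro (a | a) h <;> simp_all⟩

/-- `w` strongly resolves the pair `u, v`. -/
def StronglyResolves (G : SimpleGraph α) (w u v : α) : Prop :=
  G.edist w u = G.edist w v + G.edist v u ∨ G.edist w v = G.edist w u + G.edist u v

/-- A strong metric generator. -/
def IsStrongGenerator (G : SimpleGraph α) (S : Finset α) : Prop :=
  ∀ u v : α, u ≠ v → ∃ w ∈ S, StronglyResolves G w u v

/-- The strong metric dimension. -/
noncomputable def sdim (G : SimpleGraph α) : ℕ :=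
  sInf {k | ∃ S : Finset α, IsStrongGenerator G S ∧ S.card = k}

/-- A vertex cover. -/
def IsVertexCover (G : SimpleGraph α) (S : Finset α) : Prop :=
  ∀ ⦃u v : α⦄, G.Adj u v → u ∈ S ∨ v ∈ S

/-- The vertex cover number `α(G)`. -/
noncomputable def vcNum (G : SimpleGraph α) : ℕ :=
  sInf {k | ∃ S : Finset α, IsVertexCover G S ∧ S.card = k}

/-- The independence number `β(G)`. -/
noncomputable def indepNum (G : SimpleGraph α) : ℕ :=
  sSup {k | ∃ S : Finset α, (∀ u ∈ S, ∀ v ∈ S, ¬ G.Adj u v) ∧ S.card = k}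

section Aux

open Finset

variable {G : SimpleGraph α} {u v w : α}

lemma sr_left (G : SimpleGraph α) (u v : α) : StronglyResolves G u u v :=
  Or.inr (by simp [SimpleGraph.edist_self])

lemma sr_right (G : SimpleGraph α) (u v : α) : StronglyResolves G v u v :=
  Or.inl (by simp [SimpleGraph.edist_self])

lemma econv (h : G.Reachable u v) : G.edist u v = (G.dist u v : ℕ∞) := by
  rw [SimpleGraph.dist]
  exact (ENat.coe_toNat (by rwa [SimpleGraph.edist_ne_top_iff_reachable])).symm

lemma sr_iff_dist (hG : G.Connected) :
    StronglyResolves G w u v ↔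
      (G.dist w u = G.dist w v + G.dist v u ∨ G.dist w v = G.dist w u + G.dist u v) := by
  unfold StronglyResolves
  rw [econv (hG.preconnected w u), econv (hG.preconnected w v), econv (hG.preconnected v u),
    econv (hG.preconnected u v)]
  exact_mod_cast Iff.rfl

lemma md_iff_dist (hG : G.Connected) :
    MaxDistant G u v ↔ ∀ w, G.Adj u w → G.dist v w ≤ G.dist u v := by
  unfold MaxDistant
  refine forall₂_congr fun w _ => ?_
  rw [econv (hG.preconnected v w), econv (hG.preconnected u v)]
  exact_mod_cast Iff.rfl

lemma mmd_resolver (hG : G.Connected) (hmmd : MMD G u v) (hw : StronglyResolves G w u v) :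
    w = u ∨ w = v := by
  rw [sr_iff_dist hG] at hw
  rcases hw with h | h
  · right
    by_contra hwv
    obtain ⟨p, hp⟩ := (hG.preconnected v w).exists_walk_length_eq_dist
    cases p with
    | nil => exact hwv rfl
    | @cons _ z _ h' q =>
      have hzw : G.dist z w ≤ q.length := SimpleGraph.dist_le q
      have hz : G.dist u z ≤ G.dist v u := (md_iff_dist hG).mp hmmd.2 _ h'
      have tri : G.dist w u ≤ G.dist w z + G.dist z u := hG.dist_triangle
      have c1 : G.dist v w = G.dist w v := SimpleGraph.dist_comm
      have c2 : G.dist w z = G.dist z w := SimpleGraph.dist_comm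
      have c3 : G.dist z u = G.dist u z := SimpleGraph.dist_comm
      have c4 : G.dist v u = G.dist u v := SimpleGraph.dist_comm
      simp only [SimpleGraph.Walk.length_cons] at hp
      omega
  · left
    by_contra hwu
    obtain ⟨p, hp⟩ := (hG.preconnected u w).exists_walk_length_eq_dist
    cases p with
    | nil => exact hwu rfl
    | @cons _ z _ h' q =>
      have hzw : G.dist z w ≤ q.length := SimpleGraph.dist_le q
      have hz : G.dist v z ≤ G.dist u v := (md_iff_dist hG).mp hmmd.1 _ h'
      have tri : G.dist w v ≤ G.dist w z + G.dist z v := hG.dist_triangle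
      have c1 : G.dist u w = G.dist w u := SimpleGraph.dist_comm
      have c2 : G.dist w z = G.dist z w := SimpleGraph.dist_comm
      have c3 : G.dist z v = G.dist v z := SimpleGraph.dist_comm
      simp only [SimpleGraph.Walk.length_cons] at hp
      omega

lemma external_resolver (hG : G.Connected) (hne : u ≠ v) (h : ¬ MMD G u v) :
    ∃ w, w ≠ u ∧ w ≠ v ∧ StronglyResolves G w u v := by
  rw [MMD, not_and_or] at h
  rcases h with h | h
  · rw [md_iff_dist hG] at h; push_neg at h
    obtain ⟨w, hadj, hgt⟩ := h
    have hd1 : G.dist u w = 1 := SimpleGraph.dist_eq_one_iff_adj.mpr hadj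
    refine ⟨w, hadj.ne', fun hwv => ?_, ?_⟩
    · subst hwv; simp [SimpleGraph.dist_self] at hgt
    · rw [sr_iff_dist hG]; right
      have tri : G.dist v w ≤ G.dist v u + G.dist u w := hG.dist_triangle
      have c1 : G.dist w v = G.dist v w := SimpleGraph.dist_comm
      have c2 : G.dist w u = G.dist u w := SimpleGraph.dist_comm
      have c3 : G.dist u v = G.dist v u := SimpleGraph.dist_comm
      omega
  · rw [md_iff_dist hG] at h; push_neg at h
    obtain ⟨w, hadj, hgt⟩ := h
    have hd1 : G.dist v w = 1 := SimpleGraph.dist_eq_one_iff_adj.mpr hadj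
    refine ⟨w, fun hwu => ?_, hadj.ne', ?_⟩
    · subst hwu; simp [SimpleGraph.dist_self] at hgt
    · rw [sr_iff_dist hG]; left
      have tri : G.dist u w ≤ G.dist u v + G.dist v w := hG.dist_triangle
      have c1 : G.dist w u = G.dist u w := SimpleGraph.dist_comm
      have c2 : G.dist w v = G.dist v w := SimpleGraph.dist_comm
      have c3 : G.dist v u = G.dist u v := SimpleGraph.dist_comm
      omega

lemma chainA [Fintype α] (hG : G.Connected) (u v : α) :
    ∃ u', MaxDistant G u' v ∧ G.dist v u' = G.dist v u + G.dist u u' := by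
  classical
  set C : Finset α := univ.filter (fun x => G.dist v x = G.dist v u + G.dist u x) with hC
  have hu : u ∈ C := by simp [hC, SimpleGraph.dist_self]
  obtain ⟨u', hu'C, hmax⟩ := C.exists_max_image (fun x => G.dist v x) ⟨u, hu⟩
  have hu'eq : G.dist v u' = G.dist v u + G.dist u u' := by
    simpa [hC] using hu'C
  refine ⟨u', ?_, hu'eq⟩
  rw [md_iff_dist hG]
  intro w hadj
  by_contra hlt; push_neg at hlt
  have h1 : G.dist u' w = 1 := SimpleGraph.dist_eq_one_iff_adj.mpr hadj
  have h2 : G.dist v w ≤ G.dist v u' + G.dist u' w := hG.dist_triangle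
  have h3 : G.dist u w ≤ G.dist u u' + G.dist u' w := hG.dist_triangle
  have h4 : G.dist v w ≤ G.dist v u + G.dist u w := hG.dist_triangle
  have hcm : G.dist u' v = G.dist v u' := SimpleGraph.dist_comm
  have hwC : w ∈ C := by
    simp only [hC, mem_filter, mem_univ, true_and]
    omega
  have := hmax w hwC
  omega

lemma exists_mmd_pair [Fintype α] (hG : G.Connected) (hne : u ≠ v) :
    ∃ u' v', u' ≠ v' ∧ MMD G u' v' ∧ StronglyResolves G u' u v ∧ StronglyResolves G v' u v := by
  obtain ⟨u', hu'md, hu'⟩ := chainA hG u v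
  obtain ⟨v', hv'md, hv'⟩ := chainA hG v u'
  have huvpos : 0 < G.dist u v := hG.pos_dist_of_ne hne
  have c4 : G.dist v u = G.dist u v := SimpleGraph.dist_comm
  have hu'v' : u' ≠ v' := by
    intro h; subst h
    have h0 : G.dist u' u' = 0 := SimpleGraph.dist_self
    have cc : G.dist u' v = G.dist v u' := SimpleGraph.dist_comm
    omega
  refine ⟨u', v', hu'v', ⟨?_, hv'md⟩, ?_, ?_⟩
  · rw [md_iff_dist hG] at hu'md ⊢
    intro w hadj
    have h1 := hu'md w hadj
    have tri : G.dist v' w ≤ G.dist v' v + G.dist v w := hG.dist_triangle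
    have c1 : G.dist v' v = G.dist v v' := SimpleGraph.dist_comm
    have c2 : G.dist u' v' = G.dist v' u' := SimpleGraph.dist_comm
    omega
  · rw [sr_iff_dist hG]; right
    have c1 : G.dist u' v = G.dist v u' := SimpleGraph.dist_comm
    have c2 : G.dist u' u = G.dist u u' := SimpleGraph.dist_comm
    omega
  · rw [sr_iff_dist hG]; left
    have t1 : G.dist v' u' ≤ G.dist v' u + G.dist u u' := hG.dist_triangle
    have t2 : G.dist v' u ≤ G.dist v' v + G.dist v u := hG.dist_triangle
    have c1 : G.dist v' u' = G.dist u' v' := SimpleGraph.dist_comm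
    have c2 : G.dist u' v = G.dist v u' := SimpleGraph.dist_comm
    have c3 : G.dist v' v = G.dist v v' := SimpleGraph.dist_comm
    omega

/-- A set covering all mutually maximally distant pairs. -/
def CoverMMD (G : SimpleGraph α) (T : Finset α) : Prop :=
  ∀ u v : α, u ≠ v → MMD G u v → u ∈ T ∨ v ∈ T

lemma gen_iff_cover [Fintype α] (hG : G.Connected) (S : Finset α) :
    IsStrongGenerator G S ↔ CoverMMD G S := by
  constructor
  · intro h u v hne hmmd
    obtain ⟨w, hwS, hsr⟩ := h u v hne
    rcases mmd_resolver hG hmmd hsr with rfl | rfl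
    · exact Or.inl hwS
    · exact Or.inr hwS
  · intro h u v hne
    obtain ⟨u', v', hne', hmmd, hr1, hr2⟩ := exists_mmd_pair hG hne
    rcases h u' v' hne' hmmd with hm | hm
    · exact ⟨u', hm, hr1⟩
    · exact ⟨v', hm, hr2⟩

lemma sdim_eq_cover [Fintype α] (hG : G.Connected) :
    sdim G = sInf {k | ∃ T : Finset α, CoverMMD G T ∧ T.card = k} := by
  unfold sdim
  congr 1
  ext k
  simp only [Set.mem_setOf_eq]
  constructor
  · rintro ⟨S, hS, rfl⟩; exact ⟨S, (gen_iff_cover hG S).mp hS, rfl⟩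
  · rintro ⟨S, hS, rfl⟩; exact ⟨S, (gen_iff_cover hG S).mpr hS, rfl⟩

end Aux
section AuxLex

open Finset

variable {G : SimpleGraph α} {n' : ℕ}

/-- Abbreviation for `G ∘ K_{n'}`. -/
abbrev Lx (G : SimpleGraph α) (n' : ℕ) : SimpleGraph (α × Fin n') :=
  lexProd G (⊤ : SimpleGraph (Fin n'))

lemma lex_adj {p q : α × Fin n'} :
    (Lx G n').Adj p q ↔ G.Adj p.1 q.1 ∨ (p.1 = q.1 ∧ p.2 ≠ q.2) := by
  constructor
  · rintro (h | ⟨h1, h2⟩)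
    · exact Or.inl h
    · exact Or.inr ⟨h1, h2.ne⟩
  · rintro (h | ⟨h1, h2⟩)
    · exact Or.inl h
    · exact Or.inr ⟨h1, by simpa using h2⟩

lemma walk_lift {x c : α} (p : G.Walk x c) (d : Fin n') :
    ∃ q : (Lx G n').Walk (x, d) (c, d), q.length = p.length := by
  induction p with
  | nil => exact ⟨.nil, rfl⟩
  | cons h p ih =>
    obtain ⟨q, hq⟩ := ih
    exact ⟨.cons (Or.inl h) q, congrArg (· + 1) hq⟩

lemma edist_lex_le (hG : G.Connected) {a c : α} (hac : a ≠ c) (b d : Fin n') :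
    (Lx G n').edist (a, b) (c, d) ≤ G.edist a c := by
  obtain ⟨p, hp⟩ := (hG.preconnected a c).exists_walk_length_eq_dist
  cases p with
  | nil => exact absurd rfl hac
  | @cons _ x _ h p =>
    obtain ⟨q, hq⟩ := walk_lift (G := G) p d
    have hle := SimpleGraph.edist_le ((SimpleGraph.Walk.cons (Or.inl h) q) :
      (Lx G n').Walk (a, b) (c, d))
    change (Lx G n').edist (a, b) (c, d) ≤ ((q.length + 1 : ℕ) : ℕ∞) at hle
    rw [hq] at hle
    rw [econv (hG.preconnected a c)]
    simp only [SimpleGraph.Walk.length_cons] at hp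
    rw [← hp]
    exact_mod_cast hle

lemma edist_lex_ge (p q : α × Fin n') (w : (Lx G n').Walk p q) :
    G.edist p.1 q.1 ≤ w.length := by
  induction w with
  | nil => simp [SimpleGraph.edist_self]
  | @cons _ r _ h w ih =>
    simp only [SimpleGraph.Walk.length_cons]
    rcases h with h | ⟨h1, _⟩
    · have hone : G.edist _ r.1 ≤ 1 := le_of_eq (SimpleGraph.edist_eq_one_iff_adj.mpr h)
      calc G.edist _ _ ≤ G.edist _ r.1 + G.edist r.1 _ := SimpleGraph.edist_triangle
        _ ≤ 1 + (w.length : ℕ∞) := add_le_add hone ih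
        _ = ((w.length + 1 : ℕ) : ℕ∞) := by push_cast; ring
    · rw [h1]
      calc G.edist r.1 _ ≤ (w.length : ℕ∞) := ih
        _ ≤ ((w.length + 1 : ℕ) : ℕ∞) := by exact_mod_cast Nat.le_succ _
lemma edist_lex (hG : G.Connected) {a c : α} (hac : a ≠ c) (b d : Fin n') :
    (Lx G n').edist (a, b) (c, d) = G.edist a c := by
  refine le_antisymm (edist_lex_le hG hac b d) ?_
  have hne : (Lx G n').edist (a, b) (c, d) ≠ ⊤ := by
    refine ne_top_of_le_ne_top ?_ (edist_lex_le hG hac b d)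
    rw [SimpleGraph.edist_ne_top_iff_reachable]
    exact hG.preconnected a c
  obtain ⟨q, hq⟩ := SimpleGraph.exists_walk_of_edist_ne_top hne
  rw [← hq]
  exact edist_lex_ge _ _ q

lemma edist_lex_same {a : α} {b d : Fin n'} (hbd : b ≠ d) :
    (Lx G n').edist (a, b) (a, d) = 1 :=
  SimpleGraph.edist_eq_one_iff_adj.mpr (lex_adj.mpr (Or.inr ⟨rfl, hbd⟩))

lemma md_lex_same (hG : G.Connected) {a : α} {b d : Fin n'} (hbd : b ≠ d) :
    MaxDistant (Lx G n') (a, b) (a, d) := by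
  rintro ⟨e, x⟩ hadj
  rw [edist_lex_same hbd]
  rcases lex_adj.mp hadj with h | ⟨h1, h2⟩
  · simp only at h
    rw [edist_lex hG h.ne d x]
    exact le_of_eq (SimpleGraph.edist_eq_one_iff_adj.mpr h)
  · simp only at h1; subst h1
    by_cases hdx : d = x
    · subst hdx; simp [SimpleGraph.edist_self]
    · exact le_of_eq (edist_lex_same hdx)

lemma md_lex_iff (hG : G.Connected) {a c : α} (hac : a ≠ c) (b d : Fin n') :
    MaxDistant (Lx G n') (a, b) (c, d) ↔ MaxDistant G a c := by
  have hpos : (1 : ℕ∞) ≤ G.edist a c :=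
    Order.one_le_iff_pos.mpr (SimpleGraph.edist_pos_of_ne hac)
  constructor
  · intro h w hw
    have hadj : (Lx G n').Adj (a, b) (w, d) := lex_adj.mpr (Or.inl hw)
    have := h _ hadj
    rw [edist_lex hG hac b d] at this
    by_cases hwc : w = c
    · subst hwc; simp [SimpleGraph.edist_self]
    · rwa [edist_lex hG (Ne.symm hwc) d d] at this
  · rintro h ⟨e, x⟩ hadj
    rw [edist_lex hG hac b d]
    rcases lex_adj.mp hadj with h' | ⟨h1, _⟩
    · simp only at h'
      by_cases hec : e = c
      · subst hec
        by_cases hxd : x = d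
        · subst hxd; simp [SimpleGraph.edist_self]
        · rw [edist_lex_same (Ne.symm hxd)]; exact hpos
      · rw [edist_lex hG (Ne.symm hec) d x]
        exact h e h'
    · simp only at h1; subst h1
      rw [edist_lex hG (Ne.symm hac) d x, SimpleGraph.edist_comm]

lemma mmd_lex_same (hG : G.Connected) {a : α} {b d : Fin n'} (hbd : b ≠ d) :
    MMD (Lx G n') (a, b) (a, d) :=
  ⟨md_lex_same hG hbd, md_lex_same hG (Ne.symm hbd)⟩

lemma mmd_lex_iff (hG : G.Connected) {a c : α} (hac : a ≠ c) (b d : Fin n') :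
    MMD (Lx G n') (a, b) (c, d) ↔ MMD G a c :=
  and_congr (md_lex_iff hG hac b d) (md_lex_iff hG (Ne.symm hac) d b)

lemma boundary_lex (hG : G.Connected) (hn' : 2 ≤ n') :
    boundary (Lx G n') = Set.univ := by
  haveI : Nontrivial (Fin n') := Fin.nontrivial_iff_two_le.mpr hn'
  ext ⟨a, b⟩
  simp only [Set.mem_univ, iff_true]
  obtain ⟨b', hb'⟩ := exists_ne b
  exact ⟨(a, b'), by simp [Ne.symm hb', Prod.ext_iff], mmd_lex_same hG (Ne.symm hb')⟩

lemma srv_lex_same (hG : G.Connected) {a : α} {b d : Fin n'} (hbd : b ≠ d) (w : α × Fin n') :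
    StronglyResolves (Lx G n') w (a, b) (a, d) ↔ w = (a, b) ∨ w = (a, d) := by
  obtain ⟨e, x⟩ := w
  constructor
  · intro h
    by_cases hea : e = a
    · subst hea
      by_cases hxb : x = b
      · exact Or.inl (by rw [hxb])
      by_cases hxd : x = d
      · exact Or.inr (by rw [hxd])
      exfalso
      unfold StronglyResolves at h
      rw [edist_lex_same hxb, edist_lex_same hxd, edist_lex_same hbd,
        edist_lex_same (Ne.symm hbd)] at h
      rcases h with h | h <;> norm_num at h
    · exfalso
      unfold StronglyResolves at h
      rw [edist_lex hG hea x b, edist_lex hG hea x d, edist_lex_same hbd,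
        edist_lex_same (Ne.symm hbd), econv (hG.preconnected e a)] at h
      rcases h with h | h <;> norm_cast at h <;> omega
  · rintro (h | h)
    · rw [h]; exact sr_left _ _ _
    · rw [h]; exact sr_right _ _ _

lemma srv_lex_diff (hG : G.Connected) {a c : α} (hac : a ≠ c) (b d : Fin n') (e : α) (x : Fin n') :
    StronglyResolves (Lx G n') (e, x) (a, b) (c, d) ↔
      ((e, x) = (a, b) ∨ (e, x) = (c, d) ∨ (e ≠ a ∧ e ≠ c ∧ StronglyResolves G e a c)) := by
  have hkpos : 0 < G.dist a c := hG.pos_dist_of_ne hac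
  have hcomm : G.dist c a = G.dist a c := SimpleGraph.dist_comm
  constructor
  · intro h
    by_cases hea : e = a
    · rw [hea] at h
      by_cases hxb : x = b
      · exact Or.inl (by rw [hea, hxb])
      exfalso
      unfold StronglyResolves at h
      rw [edist_lex_same hxb, edist_lex hG hac x d, edist_lex hG (Ne.symm hac) d b,
        edist_lex hG hac b d, econv (hG.preconnected a c), econv (hG.preconnected c a)] at h
      rcases h with h | h <;> norm_cast at h <;> omega
    · by_cases hec : e = c
      · rw [hec] at h
        by_cases hxd : x = d
        · exact Or.inr (Or.inl (by rw [hec, hxd]))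
        exfalso
        unfold StronglyResolves at h
        rw [edist_lex hG (Ne.symm hac) x b, edist_lex_same hxd, edist_lex hG (Ne.symm hac) d b,
          edist_lex hG hac b d, econv (hG.preconnected c a), econv (hG.preconnected a c)] at h
        rcases h with h | h <;> norm_cast at h <;> omega
      · refine Or.inr (Or.inr ⟨hea, hec, ?_⟩)
        unfold StronglyResolves at h ⊢
        rwa [edist_lex hG hea x b, edist_lex hG hec x d, edist_lex hG (Ne.symm hac) d b,
          edist_lex hG hac b d] at h
  · rintro (h | h | ⟨h1, h2, h3⟩)
    · rw [h]; exact sr_left _ _ _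
    · rw [h]; exact sr_right _ _ _
    · unfold StronglyResolves at h3 ⊢
      rw [edist_lex hG h1 x b, edist_lex hG h2 x d, edist_lex hG (Ne.symm hac) d b,
        edist_lex hG hac b d]
      exact h3

lemma gen_lex_iff (hG : G.Connected) (hn' : 2 ≤ n') (S : Finset (α × Fin n')) :
    IsStrongGenerator (Lx G n') S ↔
      ((∀ a : α, ∀ b d : Fin n', b ≠ d → (a, b) ∈ S ∨ (a, d) ∈ S) ∧
       (∀ a c : α, a ≠ c → MMD G a c → (∀ b, (a, b) ∈ S) ∨ (∀ d, (c, d) ∈ S))) := by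
  constructor
  · intro h
    constructor
    · intro a b d hbd
      obtain ⟨w, hwS, hsr⟩ := h (a, b) (a, d) (by simp [hbd])
      rcases (srv_lex_same hG hbd w).mp hsr with rfl | rfl
      · exact Or.inl hwS
      · exact Or.inr hwS
    · intro a c hac hmmd
      by_contra hcon
      push_neg at hcon
      obtain ⟨⟨b₀, hb₀⟩, ⟨d₀, hd₀⟩⟩ := hcon
      obtain ⟨⟨e, x⟩, hwS, hsr⟩ := h (a, b₀) (c, d₀) (fun hh => hac (congrArg Prod.fst hh))
      rcases (srv_lex_diff hG hac b₀ d₀ e x).mp hsr with h' | h' | ⟨hh1, hh2, hh3⟩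
      · rw [h'] at hwS; exact hb₀ hwS
      · rw [h'] at hwS; exact hd₀ hwS
      · rcases mmd_resolver hG hmmd hh3 with rfl | rfl
        · exact hh1 rfl
        · exact hh2 rfl
  · rintro ⟨h1, h2⟩ ⟨a, b⟩ ⟨c, d⟩ hne
    by_cases hac : a = c
    · subst hac
      have hbd : b ≠ d := fun hh => hne (by rw [hh])
      rcases h1 a b d hbd with hm | hm
      · exact ⟨(a, b), hm, sr_left _ _ _⟩
      · exact ⟨(a, d), hm, sr_right _ _ _⟩
    · by_cases hmmd : MMD G a c
      · rcases h2 a c hac hmmd with hm | hm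
        · exact ⟨(a, b), hm b, sr_left _ _ _⟩
        · exact ⟨(c, d), hm d, sr_right _ _ _⟩
      · obtain ⟨e, hea, hec, hsr⟩ := external_resolver hG hac hmmd
        have hb01 : (⟨0, by omega⟩ : Fin n') ≠ ⟨1, by omega⟩ := by simp [Fin.ext_iff]
        rcases h1 e _ _ hb01 with hm | hm
        · exact ⟨(e, _), hm, (srv_lex_diff hG hac b d e _).mpr (Or.inr (Or.inr ⟨hea, hec, hsr⟩))⟩
        · exact ⟨(e, _), hm, (srv_lex_diff hG hac b d e _).mpr (Or.inr (Or.inr ⟨hea, hec, hsr⟩))⟩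

open scoped Classical in
lemma card_lower [Fintype α] (hn' : 2 ≤ n') (S : Finset (α × Fin n'))
    (h1 : ∀ a : α, ∀ b d : Fin n', b ≠ d → (a, b) ∈ S ∨ (a, d) ∈ S) :
    Fintype.card α * (n' - 1) +
      (univ.filter (fun a : α => ∀ b, (a, b) ∈ S)).card ≤ S.card := by
  classical
  set T := univ.filter (fun a : α => ∀ b, (a, b) ∈ S) with hT
  have hsum : S.card = ∑ a : α, (S.filter (fun p => p.1 = a)).card :=
    Finset.card_eq_sum_card_fiberwise (fun p _ => Finset.mem_univ p.1)
  have key : ∀ a : α, (if a ∈ T then n' else n' - 1) ≤ (S.filter (fun p => p.1 = a)).card := by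
    intro a
    by_cases ha : a ∈ T
    · rw [if_pos ha]
      rw [hT, mem_filter] at ha
      have hcle : (univ : Finset (Fin n')).card ≤ (S.filter (fun p => p.1 = a)).card := by
        apply Finset.card_le_card_of_injOn (fun b => (a, b))
        · intro b _; simp [Finset.mem_filter, ha.2 b]
        · intro b _ b' _ hbb; exact congrArg Prod.snd hbb
      simpa using hcle
    · rw [if_neg ha]
      rw [hT, mem_filter] at ha
      push_neg at ha
      obtain ⟨b₀, hb₀⟩ := ha (mem_univ a)
      have hcle : (univ.erase b₀).card ≤ (S.filter (fun p => p.1 = a)).card := by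
        apply Finset.card_le_card_of_injOn (fun b => (a, b))
        · intro b hb
          replace hb : b ≠ b₀ := by simpa using hb
          rcases h1 a b b₀ hb with hm | hm
          · simp [Finset.mem_filter, hm]
          · exact absurd hm hb₀
        · intro b _ b' _ hbb; exact congrArg Prod.snd hbb
      simpa [Finset.card_erase_of_mem] using hcle
  have main : Fintype.card α * (n' - 1) + T.card
      = ∑ a : α, (if a ∈ T then n' else n' - 1) := by
    have hsplit : ∀ a : α, (if a ∈ T then n' else n' - 1)
        = (n' - 1) + (if a ∈ T then 1 else 0) := by
      intro a; by_cases ha : a ∈ T <;> simp [ha] <;> omega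
    rw [Finset.sum_congr rfl (fun a _ => hsplit a), Finset.sum_add_distrib]
    simp [Finset.sum_ite_mem, mul_comm]
  calc Fintype.card α * (n' - 1) + T.card
      = ∑ a : α, (if a ∈ T then n' else n' - 1) := main
    _ ≤ ∑ a : α, (S.filter (fun p => p.1 = a)).card := Finset.sum_le_sum (fun a _ => key a)
    _ = S.card := hsum.symm

lemma exists_good_S [Fintype α] (hn' : 2 ≤ n') (T : Finset α) :
    ∃ S : Finset (α × Fin n'),
      (∀ a : α, ∀ b d : Fin n', b ≠ d → (a, b) ∈ S ∨ (a, d) ∈ S) ∧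
      (∀ a ∈ T, ∀ b, (a, b) ∈ S) ∧
      S.card = Fintype.card α * (n' - 1) + T.card := by
  classical
  have hn0 : 0 < n' := by omega
  set z : Fin n' := ⟨0, hn0⟩ with hz
  set B : Finset (α × Fin n') := (univ \ T) ×ˢ {z} with hB
  have hmem : ∀ (a : α) (y : Fin n'), y ≠ z → (a, y) ∈ univ \ B := by
    intro a y hy
    rw [Finset.mem_sdiff]
    refine ⟨Finset.mem_univ _, fun hc => ?_⟩
    rw [hB, Finset.mem_product, Finset.mem_singleton] at hc
    exact hy hc.2
  refine ⟨univ \ B, ?_, ?_, ?_⟩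
  · intro a b d hbd
    by_cases hbz : b = z
    · refine Or.inr (hmem a d ?_)
      rw [← hbz]; exact hbd.symm
    · exact Or.inl (hmem a b hbz)
  · intro a ha b
    rw [Finset.mem_sdiff]
    refine ⟨Finset.mem_univ _, fun hc => ?_⟩
    rw [hB, Finset.mem_product, Finset.mem_sdiff] at hc
    exact hc.1.2 ha
  · rw [Finset.card_sdiff_of_subset (Finset.subset_univ B), hB, Finset.card_product,
      Finset.card_singleton, Finset.card_sdiff_of_subset (Finset.subset_univ T)]
    simp only [Finset.card_univ, Fintype.card_prod, Fintype.card_fin, mul_one]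
    have hTle : T.card ≤ Fintype.card α := by
      simpa using Finset.card_le_card (Finset.subset_univ T)
    have hmul : Fintype.card α * n' = Fintype.card α * (n' - 1) + Fintype.card α := by
      have hsone : n' - 1 + 1 = n' := by omega
      calc Fintype.card α * n' = Fintype.card α * (n' - 1 + 1) := by rw [hsone]
        _ = _ := by ring
    omega

open scoped Classical in
lemma sdim_lex [Fintype α] (hG : G.Connected) (hn' : 2 ≤ n') :
    sdim (Lx G n') = Fintype.card α * (n' - 1) + sdim G := by
  classical
  rw [sdim_eq_cover hG]
  set M := {k | ∃ T : Finset α, CoverMMD G T ∧ T.card = k} with hM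
  have hMne : M.Nonempty := ⟨(univ : Finset α).card, univ, fun u v _ _ => Or.inl (mem_univ u), rfl⟩
  obtain ⟨T₀, hT₀cov, hT₀card⟩ := Nat.sInf_mem hMne
  obtain ⟨S₀, hS₀1, hS₀T, hS₀card⟩ := exists_good_S hn' T₀
  have hS₀gen : IsStrongGenerator (Lx G n') S₀ := by
    rw [gen_lex_iff hG hn']
    refine ⟨hS₀1, fun a c hac hmmd => ?_⟩
    rcases hT₀cov a c hac hmmd with hm | hm
    · exact Or.inl (fun b => hS₀T a hm b)
    · exact Or.inr (fun d => hS₀T c hm d)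
  unfold sdim
  have hm : S₀.card ∈ {k | ∃ S : Finset (α × Fin n'), IsStrongGenerator (Lx G n') S ∧ S.card = k} :=
    ⟨S₀, hS₀gen, rfl⟩
  apply le_antisymm
  · have hle := Nat.sInf_le hm
    rw [hS₀card, hT₀card] at hle
    exact hle
  · apply le_csInf ⟨S₀.card, hm⟩
    rintro k ⟨S, hSgen, rfl⟩
    rw [gen_lex_iff hG hn'] at hSgen
    obtain ⟨h1, h2⟩ := hSgen
    set T := univ.filter (fun a : α => ∀ b, (a, b) ∈ S) with hT
    have hTcov : CoverMMD G T := by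
      intro u v hne hmmd
      rcases h2 u v hne hmmd with hm | hm
      · exact Or.inl (by simp [hT, mem_filter]; exact hm)
      · exact Or.inr (by simp [hT, mem_filter]; exact hm)
    have hlow := card_lower hn' S h1
    rw [← hT] at hlow
    have hMle : sInf M ≤ T.card := Nat.sInf_le ⟨T, hTcov, rfl⟩
    omega

open scoped Classical in
lemma iso_lex [Fintype α] (hG : G.Connected) (hn' : 2 ≤ n') :
    Nonempty (srGraph (Lx G n') ≃g
      disjUnion (lexProd (srGraph G) (⊤ : SimpleGraph (Fin n')))
        (copies (Fintype.card α - Nat.card (boundary G)) (⊤ : SimpleGraph (Fin n')))) := by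
  classical
  haveI : Fintype (boundary G) := Fintype.ofFinite _
  haveI : Fintype ((boundary G)ᶜ : Set α) := Fintype.ofFinite _
  set k := Fintype.card α - Nat.card (boundary G) with hk
  have hcard : Fintype.card ((boundary G)ᶜ : Set α) = k := by
    rw [hk, Nat.card_eq_fintype_card]
    exact Fintype.card_compl_set _
  set e : ((boundary G)ᶜ : Set α) ≃ Fin k := Fintype.equivFinOfCardEq hcard with he
  have hbd := boundary_lex (G := G) hG hn'
  let g : (boundary G × Fin n') ⊕ (Fin k × Fin n') → α × Fin n' := fun x =>
    match x with
    | Sum.inl (a, b) => (a.1, b)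
    | Sum.inr (i, b) => ((e.symm i).1, b)
  have hgmem : ∀ x, g x ∈ boundary (Lx G n') := fun x => by rw [hbd]; trivial
  let F : (boundary G × Fin n') ⊕ (Fin k × Fin n') → (boundary (Lx G n') : Set (α × Fin n')) :=
    fun x => ⟨g x, hgmem x⟩
  have hinj : Function.Injective F := by
    rintro (⟨a, b⟩ | ⟨i, b⟩) (⟨c, d⟩ | ⟨j, d⟩) h <;>
      have h' := Prod.ext_iff.mp (congrArg Subtype.val h)
    · simp only [Sum.inl.injEq, Prod.ext_iff]
      exact ⟨Subtype.ext h'.1, h'.2⟩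
    · have h1 : a.1 = (e.symm j).1 := h'.1
      exact absurd (h1 ▸ a.2) (e.symm j).2
    · have h1 : (e.symm i).1 = c.1 := h'.1
      exact absurd (h1 ▸ c.2) (e.symm i).2
    · simp only [Sum.inr.injEq, Prod.ext_iff]
      exact ⟨e.symm.injective (Subtype.ext h'.1), h'.2⟩
  have hsurj : Function.Surjective F := by
    rintro ⟨⟨a, b⟩, _⟩
    by_cases ha : a ∈ boundary G
    · exact ⟨Sum.inl (⟨a, ha⟩, b), Subtype.ext rfl⟩
    · refine ⟨Sum.inr (e ⟨a, ha⟩, b), Subtype.ext ?_⟩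
      show ((e.symm (e ⟨a, ha⟩)).1, b) = (a, b)
      rw [Equiv.symm_apply_apply]
  refine ⟨(SimpleGraph.Iso.symm ⟨Equiv.ofBijective F ⟨hinj, hsurj⟩, @fun x y => ?_⟩)⟩
  rcases x with ⟨⟨a, ha⟩, b⟩ | ⟨i, b⟩ <;> rcases y with ⟨⟨c, hc⟩, d⟩ | ⟨j, d⟩
  · show ((a, b) ≠ (c, d) ∧ MMD (Lx G n') (a, b) (c, d)) ↔
      ((srGraph G).Adj ⟨a, ha⟩ ⟨c, hc⟩ ∨ (⟨a, ha⟩ : boundary G) = ⟨c, hc⟩ ∧ (⊤ : SimpleGraph (Fin n')).Adj b d)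
    by_cases hac : a = c
    · subst hac
      constructor
      · rintro ⟨hne, _⟩
        have hbd' : b ≠ d := fun hh => hne (by rw [hh])
        exact Or.inr ⟨Subtype.ext rfl, by simpa using hbd'⟩
      · rintro (hadj | ⟨_, hbd'⟩)
        · exact absurd rfl hadj.1
        · have hbd'' : b ≠ d := by simpa using hbd'
          exact ⟨by simp [Prod.ext_iff, hbd''], mmd_lex_same hG hbd''⟩
    · constructor
      · rintro ⟨_, hmmd⟩
        exact Or.inl ⟨hac, (mmd_lex_iff hG hac b d).mp hmmd⟩
      · rintro (hadj | ⟨hsub, _⟩)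
        · refine ⟨by simp [Prod.ext_iff, hac], (mmd_lex_iff hG hac b d).mpr hadj.2⟩
        · exact absurd (congrArg Subtype.val hsub) hac
  · refine iff_of_false ?_ (fun h => h)
    rintro ⟨_, hmmd⟩
    have hac : a ≠ (e.symm j).1 := fun hh => (e.symm j).2 (hh ▸ ha)
    have hmg := (mmd_lex_iff hG hac b d).mp hmmd
    exact (e.symm j).2 ⟨a, Ne.symm hac, hmg.2, hmg.1⟩
  · refine iff_of_false ?_ (fun h => h)
    rintro ⟨_, hmmd⟩
    have hac : (e.symm i).1 ≠ c := fun hh => (e.symm i).2 (hh ▸ hc)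
    have hmg := (mmd_lex_iff hG hac b d).mp hmmd
    exact (e.symm i).2 ⟨c, hac, hmg⟩
  · show (((e.symm i).1, b) ≠ ((e.symm j).1, d) ∧
        MMD (Lx G n') ((e.symm i).1, b) ((e.symm j).1, d)) ↔ (i = j ∧ b ≠ d)
    by_cases hij : i = j
    · subst hij
      constructor
      · rintro ⟨hne, _⟩
        exact ⟨rfl, fun hh => hne (by rw [hh])⟩
      · rintro ⟨_, hbd'⟩
        exact ⟨by simp [Prod.ext_iff, hbd'], mmd_lex_same hG hbd'⟩
    · refine iff_of_false ?_ (fun h => hij h.1)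
      rintro ⟨_, hmmd⟩
      have hac : (e.symm i).1 ≠ (e.symm j).1 :=
        fun hh => hij (e.symm.injective (Subtype.ext hh))
      have hmg := (mmd_lex_iff hG hac b d).mp hmmd
      exact (e.symm i).2 ⟨(e.symm j).1, hac, hmg⟩

end AuxLex

theorem stmt_17 [Fintype α] (G : SimpleGraph α) (hG : G.Connected)
    (hn : 2 ≤ Fintype.card α) (n' : ℕ) (hn' : 2 ≤ n') :
    Nonempty (srGraph (lexProd G (⊤ : SimpleGraph (Fin n'))) ≃g
      disjUnion (lexProd (srGraph G) (⊤ : SimpleGraph (Fin n')))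
        (copies (Fintype.card α - Nat.card (boundary G)) (⊤ : SimpleGraph (Fin n')))) ∧
    sdim (lexProd G (⊤ : SimpleGraph (Fin n'))) =
      Fintype.card α * (n' - 1) + sdim G := ⟨iso_lex hG hn', sdim_lex hG hn'⟩

end Paper
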